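/- Let (W, r_1, …, r_n) be a Strip Packing instance whose rectangles are listed in the FQW-ordering with Q ≠ ∅, and consider its BL packing. For every i with L + 1 ≤ i ≤ a + b, either the region H_i of the horizontal strip partition is contained in H', or every proper horizontal line in H_i has occupied fraction at least 1/2. -/

import Mathlib

open scoped Classical
open MeasureTheory

/-- An axis-parallel rectangle, given by its width and its height. -/
structure Rect where
  w : ℝ
  h : ℝ

/-- A Strip Packing instance: a strip of width `W > 0` and `n` rectangles
`r 0, …, r (n-1)`, each with positive height and width at most `W`. -/
structure SPInstance (n : ℕ) where
  W : ℝ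
  r : Fin n → Rect
  W_pos : 0 < W
  w_pos : ∀ i, 0 < (r i).w
  w_le_W : ∀ i, (r i).w ≤ W
  h_pos : ∀ i, 0 < (r i).h

/-- The open box of rectangle `R` placed at position `p`. -/
def openBox (R : Rect) (p : ℝ × ℝ) : Set (ℝ × ℝ) :=
  Set.Ioo p.1 (p.1 + R.w) ×ˢ Set.Ioo p.2 (p.2 + R.h)

/-- The closed box of rectangle `R` placed at position `p`. -/
def closedBox (R : Rect) (p : ℝ × ℝ) : Set (ℝ × ℝ) :=
  Set.Icc p.1 (p.1 + R.w) ×ˢ Set.Icc p.2 (p.2 + R.h)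

namespace SPInstance

variable {n : ℕ}

/-- Rectangle `i` placed at `p` lies inside the strip. -/
def InStrip (I : SPInstance n) (i : Fin n) (p : ℝ × ℝ) : Prop :=
  0 ≤ p.1 ∧ p.1 + (I.r i).w ≤ I.W ∧ 0 ≤ p.2

/-- `pos` is a feasible packing: each rectangle lies in the strip and the open
boxes are pairwise disjoint. -/
def Feasible (I : SPInstance n) (pos : Fin n → ℝ × ℝ) : Prop :=
  (∀ i, I.InStrip i (pos i)) ∧
    Pairwise (fun i j : Fin n =>
      Disjoint (openBox (I.r i) (pos i)) (openBox (I.r j) (pos j)))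

/-- The height of a packing, `max_i (y_i + h_i)`. -/
noncomputable def height (I : SPInstance n) (pos : Fin n → ℝ × ℝ) : ℝ :=
  ⨆ i, ((pos i).2 + (I.r i).h)

/-- The minimum height of a feasible packing. -/
noncomputable def hOPT (I : SPInstance n) : ℝ :=
  sInf {H | ∃ pos, I.Feasible pos ∧ I.height pos = H}

/-- The maximum height of a rectangle of the instance. -/
noncomputable def hmax (I : SPInstance n) : ℝ :=
  ⨆ i, (I.r i).h

/-- Rectangle `i` can feasibly be placed at `p`, given the rectangles
`j < i` already placed at `pos j`. -/
def FeasibleAt (I : SPInstance n) (pos : Fin n → ℝ × ℝ) (i : Fin n) (p : ℝ × ℝ) : Prop :=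
  I.InStrip i p ∧ ∀ j : Fin n, j < i →
    Disjoint (openBox (I.r i) p) (openBox (I.r j) (pos j))

/-- `pos` is the Bottom-Left packing for the ordering `r 0, r 1, …`: every
rectangle is feasibly placed, at the lexicographically minimal `(y, x)`. -/
def IsBL (I : SPInstance n) (pos : Fin n → ℝ × ℝ) : Prop :=
  ∀ i : Fin n, I.FeasibleAt pos i (pos i) ∧
    ∀ p : ℝ × ℝ, I.FeasibleAt pos i p →
      (pos i).2 < p.2 ∨ ((pos i).2 = p.2 ∧ (pos i).1 ≤ p.1)

/-- Greedy construction of the set `F` of the FQW-partition, processing the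
rectangles in the order `σ 0, σ 1, …` and adding a rectangle whenever the
total width of `F` stays at most `W`. -/
noncomputable def greedyF (I : SPInstance n) (σ : Equiv.Perm (Fin n)) : Finset (Fin n) :=
  (List.finRange n).foldl
    (fun F k =>
      if (I.r (σ k)).w + ∑ f ∈ F, (I.r f).w ≤ I.W then insert (σ k) F else F) ∅

end SPInstance

/-- An FQW-partition datum: a processing order `σ` of the rectangles that is
sorted by decreasing height. -/
structure FQW {n : ℕ} (I : SPInstance n) where
  σ : Equiv.Perm (Fin n)
  sorted : ∀ k k' : Fin n, k ≤ k' → (I.r (σ k')).h ≤ (I.r (σ k)).h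

namespace FQW

variable {n : ℕ} {I : SPInstance n}

/-- The set `F` of the FQW-partition. -/
noncomputable def F (d : FQW I) : Finset (Fin n) := I.greedyF d.σ

/-- The set `𝒲` of the FQW-partition: rectangles not in `F` of width
greater than `W/2`. -/
noncomputable def Wset (d : FQW I) : Finset (Fin n) :=
  Finset.univ.filter fun i => i ∉ d.F ∧ I.W / 2 < (I.r i).w

/-- The set `Q` of the FQW-partition: all remaining rectangles. -/
noncomputable def Q (d : FQW I) : Finset (Fin n) :=
  Finset.univ.filter fun i => i ∉ d.F ∧ ¬ I.W / 2 < (I.r i).w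

/-- The rectangles of the instance are listed in the FQW-ordering: first `F`
sorted by decreasing height, then `Q` sorted by decreasing width, then `𝒲`. -/
def IsOrdered (d : FQW I) : Prop :=
  (∀ i : Fin n, i ∈ d.F ↔ (i : ℕ) < d.F.card) ∧
  (∀ i : Fin n, i ∈ d.Q ↔ d.F.card ≤ (i : ℕ) ∧ (i : ℕ) < d.F.card + d.Q.card) ∧
  (∀ i j : Fin n, (i : ℕ) ≤ (j : ℕ) → (j : ℕ) < d.F.card → (I.r j).h ≤ (I.r i).h) ∧
  (∀ i j : Fin n, d.F.card ≤ (i : ℕ) → (i : ℕ) ≤ (j : ℕ) →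
    (j : ℕ) < d.F.card + d.Q.card → (I.r j).w ≤ (I.r i).w)

end FQW

/-- `max {y_{r_1}, …, y_{r_i}}` (the first `i` rectangles, `0` if `i = 0`):
the lower boundary of the region `H_{i+1}` of the horizontal strip partition. -/
noncomputable def maxYBelow {n : ℕ} (pos : Fin n → ℝ × ℝ) (i : ℕ) : ℝ :=
  ⨆ j : {j : Fin n // (j : ℕ) < i}, (pos (j : Fin n)).2

namespace SPInstance

variable {n : ℕ}

/-- The horizontal line at height `t` is proper: it meets no top or
bottom face of a rectangle. -/
def ProperLine (I : SPInstance n) (pos : Fin n → ℝ × ℝ) (t : ℝ) : Prop :=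
  ∀ j : Fin n, t ≠ (pos j).2 ∧ t ≠ (pos j).2 + (I.r j).h

/-- Rectangle `j` intersects the horizontal line at height `t`. -/
def Intersects (I : SPInstance n) (pos : Fin n → ℝ × ℝ) (j : Fin n) (t : ℝ) : Prop :=
  (pos j).2 < t ∧ t < (pos j).2 + (I.r j).h

/-- The occupied part of the horizontal line at height `t`. -/
noncomputable def occupied (I : SPInstance n) (pos : Fin n → ℝ × ℝ) (t : ℝ) : Set ℝ :=
  ⋃ j ∈ {j : Fin n | I.Intersects pos j t}, Set.Icc (pos j).1 ((pos j).1 + (I.r j).w)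

/-- The occupied fraction of the horizontal line at height `t`. -/
noncomputable def occFrac (I : SPInstance n) (pos : Fin n → ℝ × ℝ) (t : ℝ) : ℝ :=
  (volume (I.occupied pos t)).toReal / I.W

/-- The region `H_{i+1}` (for the `0`-based index `i`) of the horizontal strip
partition: `[0, W] × [max {y_{r_1}, …, y_{r_i}}, y_{r_{i+1}})`. -/
def regionH (I : SPInstance n) (pos : Fin n → ℝ × ℝ) (i : Fin n) : Set (ℝ × ℝ) :=
  Set.Icc 0 I.W ×ˢ Set.Ico (maxYBelow pos (i : ℕ)) (pos i).2

/-- `G` is an unoccupied gap of the horizontal line at height `t`: a maximal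
subinterval of `[0, W]` disjoint from the occupied part of the line. -/
def IsGap (I : SPInstance n) (pos : Fin n → ℝ × ℝ) (t : ℝ) (G : Set ℝ) : Prop :=
  G.Nonempty ∧ G ⊆ Set.Icc 0 I.W ∧ G.OrdConnected ∧ Disjoint G (I.occupied pos t) ∧
    ∀ G' : Set ℝ, G'.OrdConnected → G' ⊆ Set.Icc 0 I.W →
      Disjoint G' (I.occupied pos t) → G ⊆ G' → G' = G

/-- `j` is a left supporter of `i`: it comes before `i` in the ordering, its
right face touches the left face of `i`, and their open `y`-ranges intersect. -/
def IsLeftSupporter (I : SPInstance n) (pos : Fin n → ℝ × ℝ) (i j : Fin n) : Prop :=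
  j < i ∧ (pos j).1 + (I.r j).w = (pos i).1 ∧
    (pos j).2 < (pos i).2 + (I.r i).h ∧ (pos i).2 < (pos j).2 + (I.r j).h

/-- `j` is a bottom supporter of `i`: it comes before `i` in the ordering, its
top face touches the bottom face of `i`, and their open `x`-ranges intersect. -/
def IsBottomSupporter (I : SPInstance n) (pos : Fin n → ℝ × ℝ) (i j : Fin n) : Prop :=
  j < i ∧ (pos j).2 + (I.r j).h = (pos i).2 ∧
    (pos j).1 < (pos i).1 + (I.r i).w ∧ (pos i).1 < (pos j).1 + (I.r j).w

/-- `j` is the leftmost bottom supporter of `i`. -/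
def IsLeftmostBottomSupporter (I : SPInstance n) (pos : Fin n → ℝ × ℝ)
    (i j : Fin n) : Prop :=
  I.IsBottomSupporter pos i j ∧
    ∀ j' : Fin n, I.IsBottomSupporter pos i j' → (pos j).1 ≤ (pos j').1

end SPInstance

/-- `iT` is the top rectangle `r_T` of `Q`: the rectangle of `Q` whose top face
is highest, ties broken by highest bottom face. -/
def IsTopRect {n : ℕ} (I : SPInstance n) (d : FQW I) (pos : Fin n → ℝ × ℝ)
    (iT : Fin n) : Prop :=
  iT ∈ d.Q ∧ ∀ j ∈ d.Q,
    (pos j).2 + (I.r j).h < (pos iT).2 + (I.r iT).h ∨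
    ((pos j).2 + (I.r j).h = (pos iT).2 + (I.r iT).h ∧ (pos j).2 ≤ (pos iT).2)

/-- `iL` is the left rectangle `r_L` of `Q`: the first rectangle of `Q` in the
ordering touching the left strip boundary, and `r_T` if there is none. -/
def IsLeftRect {n : ℕ} (I : SPInstance n) (d : FQW I) (pos : Fin n → ℝ × ℝ)
    (iT iL : Fin n) : Prop :=
  (iL ∈ d.Q ∧ (pos iL).1 = 0 ∧ ∀ j ∈ d.Q, (pos j).1 = 0 → iL ≤ j) ∨
  ((∀ j ∈ d.Q, (pos j).1 ≠ 0) ∧ iL = iT)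

/-- The region `H' = [0, W] × ([0, h_{r_T}] ∪ [y_{r_T}, y_{r_T} + h_{r_T}])`. -/
def Hprime {n : ℕ} (I : SPInstance n) (pos : Fin n → ℝ × ℝ) (iT : Fin n) :
    Set (ℝ × ℝ) :=
  Set.Icc 0 I.W ×ˢ
    (Set.Icc 0 (I.r iT).h ∪ Set.Icc (pos iT).2 ((pos iT).2 + (I.r iT).h))

/-- The type `T(ℓ)` of the proper horizontal line at height `t`: the rectangles
of `Q` intersecting the line whose index is smaller than the least index `j`
with `y_{r_j} > t` (equivalently, all rectangles with index at most theirs have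
bottom face at height at most `t`). -/
noncomputable def TypeOf {n : ℕ} (I : SPInstance n) (d : FQW I)
    (pos : Fin n → ℝ × ℝ) (t : ℝ) : Finset (Fin n) :=
  Finset.univ.filter fun i =>
    i ∈ d.Q ∧ I.Intersects pos i t ∧ ∀ j : Fin n, j ≤ i → (pos j).2 ≤ t

/-- `i` is `LM(ℓ)`: the rectangle of `T(ℓ)` with smallest `x`-coordinate. -/
def IsLM {n : ℕ} (I : SPInstance n) (d : FQW I) (pos : Fin n → ℝ × ℝ) (t : ℝ)
    (i : Fin n) : Prop :=
  i ∈ TypeOf I d pos t ∧ ∀ j ∈ TypeOf I d pos t, (pos i).1 ≤ (pos j).1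

/-- The horizontal line at height `t` lies in `H_{a+2} ∪ ⋯ ∪ H_L`, where `iL`
is the `0`-based index of `r_L` (so `L = iL + 1`, `1`-based). -/
def LineInHUnion {n : ℕ} (I : SPInstance n) (d : FQW I) (pos : Fin n → ℝ × ℝ)
    (iL : Fin n) (t : ℝ) : Prop :=
  ∃ m : Fin n, d.F.card + 1 ≤ (m : ℕ) ∧ m ≤ iL ∧
    maxYBelow pos (m : ℕ) ≤ t ∧ t < (pos m).2

/-- The space `H_{a+2} ∪ ⋯ ∪ H_L`, where `iL` is the `0`-based index of `r_L`. -/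
def regionHUnion {n : ℕ} (I : SPInstance n) (d : FQW I) (pos : Fin n → ℝ × ℝ)
    (iL : Fin n) : Set (ℝ × ℝ) :=
  ⋃ m ∈ {m : Fin n | d.F.card + 1 ≤ (m : ℕ) ∧ m ≤ iL}, I.regionH pos m

/-- The horizontal line at height `t` belongs to `L^k`: it is a proper line of
order `k` lying in `H_{a+2} ∪ ⋯ ∪ H_L`. -/
def InLk {n : ℕ} (I : SPInstance n) (d : FQW I) (pos : Fin n → ℝ × ℝ)
    (iL : Fin n) (k : ℕ) (t : ℝ) : Prop :=
  I.ProperLine pos t ∧ LineInHUnion I d pos iL t ∧ (TypeOf I d pos t).card = k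

/-- `i` belongs to `R^k`: it is `LM(ℓ)` for some line `ℓ ∈ L^k`. -/
def InRk {n : ℕ} (I : SPInstance n) (d : FQW I) (pos : Fin n → ℝ × ℝ)
    (iL : Fin n) (k : ℕ) (i : Fin n) : Prop :=
  ∃ t : ℝ, InLk I d pos iL k t ∧ IsLM I d pos t i

/-- `i` is `LM^k`: the rectangle of `R^k` with smallest `x`-coordinate,
ties broken by largest `y`-coordinate. -/
def IsLMk {n : ℕ} (I : SPInstance n) (d : FQW I) (pos : Fin n → ℝ × ℝ)
    (iL : Fin n) (k : ℕ) (i : Fin n) : Prop :=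
  InRk I d pos iL k i ∧ ∀ j : Fin n, InRk I d pos iL k j →
    (pos i).1 < (pos j).1 ∨ ((pos i).1 = (pos j).1 ∧ (pos j).2 ≤ (pos i).2)

/-- `v = x_F^ℓ` for the line `ℓ` at height `t`: the right face `x + w` of the
rightmost rectangle of `F` intersecting `ℓ`, and `0` if there is none. -/
def IsXF {n : ℕ} (I : SPInstance n) (d : FQW I) (pos : Fin n → ℝ × ℝ)
    (t v : ℝ) : Prop :=
  ((∃ f ∈ d.F, I.Intersects pos f t ∧ v = (pos f).1 + (I.r f).w) ∧
    ∀ f ∈ d.F, I.Intersects pos f t → (pos f).1 + (I.r f).w ≤ v) ∨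
  ((∀ f ∈ d.F, ¬ I.Intersects pos f t) ∧ v = 0)



section AuxBoxes

lemma mem_openBox {R : Rect} {q p : ℝ × ℝ} :
    p ∈ openBox R q ↔ (q.1 < p.1 ∧ p.1 < q.1 + R.w) ∧ (q.2 < p.2 ∧ p.2 < q.2 + R.h) := by
  simp [openBox, Set.mem_prod, Set.mem_Ioo]

lemma disjoint_openBox_of_xsep {R1 R2 : Rect} {p1 p2 : ℝ × ℝ}
    (h : p1.1 + R1.w ≤ p2.1 ∨ p2.1 + R2.w ≤ p1.1) :
    Disjoint (openBox R1 p1) (openBox R2 p2) := by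
  rw [Set.disjoint_left]
  intro p hp1 hp2
  rw [mem_openBox] at hp1 hp2
  rcases h with h | h <;> linarith [hp1.1.1, hp1.1.2, hp2.1.1, hp2.1.2]

lemma disjoint_openBox_of_ysep {R1 R2 : Rect} {p1 p2 : ℝ × ℝ}
    (h : p1.2 + R1.h ≤ p2.2 ∨ p2.2 + R2.h ≤ p1.2) :
    Disjoint (openBox R1 p1) (openBox R2 p2) := by
  rw [Set.disjoint_left]
  intro p hp1 hp2
  rw [mem_openBox] at hp1 hp2
  rcases h with h | h <;> linarith [hp1.2.1, hp1.2.2, hp2.2.1, hp2.2.2]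

lemma sep_of_disjoint {R1 R2 : Rect} {p1 p2 : ℝ × ℝ} (hw1 : 0 < R1.w) (hh1 : 0 < R1.h)
    (hw2 : 0 < R2.w) (hh2 : 0 < R2.h)
    (hd : Disjoint (openBox R1 p1) (openBox R2 p2)) :
    (p1.1 + R1.w ≤ p2.1 ∨ p2.1 + R2.w ≤ p1.1) ∨
      (p1.2 + R1.h ≤ p2.2 ∨ p2.2 + R2.h ≤ p1.2) := by
  by_contra hcon
  push_neg at hcon
  obtain ⟨⟨hx1, hx2⟩, hy1, hy2⟩ := hcon
  set zx : ℝ := (max p1.1 p2.1 + min (p1.1 + R1.w) (p2.1 + R2.w)) / 2 with hzx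
  set zy : ℝ := (max p1.2 p2.2 + min (p1.2 + R1.h) (p2.2 + R2.h)) / 2 with hzy
  have hmx : max p1.1 p2.1 < min (p1.1 + R1.w) (p2.1 + R2.w) := by
    simp only [max_lt_iff, lt_min_iff]
    refine ⟨⟨by linarith, by linarith⟩, ⟨by linarith, by linarith⟩⟩
  have hmy : max p1.2 p2.2 < min (p1.2 + R1.h) (p2.2 + R2.h) := by
    simp only [max_lt_iff, lt_min_iff]
    refine ⟨⟨by linarith, by linarith⟩, ⟨by linarith, by linarith⟩⟩
  have hz1 : (zx, zy) ∈ openBox R1 p1 := by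
    rw [mem_openBox]
    have h1 : p1.1 ≤ max p1.1 p2.1 := le_max_left _ _
    have h2 : min (p1.1 + R1.w) (p2.1 + R2.w) ≤ p1.1 + R1.w := min_le_left _ _
    have h3 : p1.2 ≤ max p1.2 p2.2 := le_max_left _ _
    have h4 : min (p1.2 + R1.h) (p2.2 + R2.h) ≤ p1.2 + R1.h := min_le_left _ _
    constructor <;> constructor <;> simp only [hzx, hzy] <;> linarith
  have hz2 : (zx, zy) ∈ openBox R2 p2 := by
    rw [mem_openBox]
    have h1 : p2.1 ≤ max p1.1 p2.1 := le_max_right _ _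
    have h2 : min (p1.1 + R1.w) (p2.1 + R2.w) ≤ p2.1 + R2.w := min_le_right _ _
    have h3 : p2.2 ≤ max p1.2 p2.2 := le_max_right _ _
    have h4 : min (p1.2 + R1.h) (p2.2 + R2.h) ≤ p2.2 + R2.h := min_le_right _ _
    constructor <;> constructor <;> simp only [hzx, hzy] <;> linarith
  exact Set.disjoint_left.mp hd hz1 hz2

end AuxBoxes

section AuxMeasure
open MeasureTheory

lemma ofReal_two_mul' (x : ℝ) : ENNReal.ofReal (2 * x) = 2 * ENNReal.ofReal x := by
  rcases le_or_gt 0 x with h | h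
  · rw [two_mul, ENNReal.ofReal_add h h, two_mul]
  · rw [ENNReal.ofReal_of_nonpos (by linarith), ENNReal.ofReal_of_nonpos h.le, mul_zero]

lemma lemA {ι : Type*} [DecidableEq ι] (K : Finset ι) (A B : ι → ℝ) (w Wd : ℝ)
    (hw : 0 < w)
    (hab : ∀ i ∈ K, A i + w ≤ B i) (hA0 : ∀ i ∈ K, 0 ≤ A i)
    (hBW : ∀ i ∈ K, B i ≤ Wd)
    (h0 : ∃ i ∈ K, A i = 0)
    (hwin : ∀ x0 : ℝ, 0 ≤ x0 → x0 + w ≤ Wd → ∃ i ∈ K, A i < x0 + w ∧ x0 < B i) :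
    ENNReal.ofReal Wd ≤ 2 * volume (⋃ i ∈ K, Set.Icc (A i) (B i)) := by
  classical
  set U := ⋃ i ∈ K, Set.Icc (A i) (B i) with hU
  have hUmeas : MeasurableSet U := by
    apply MeasurableSet.biUnion (K.countable_toSet)
    intro i _; exact measurableSet_Icc
  have main : ∀ N : ℕ, ∀ d : ℝ, ((K.image B).filter (fun x => x < d)).card ≤ N →
      (∃ i ∈ K, B i = d) → (∃ i ∈ K, A i + w ≤ d ∧ d ≤ B i) →
      ENNReal.ofReal (d + w) ≤ 2 * volume (U ∩ Set.Icc 0 d) := by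
    intro N
    induction N using Nat.strong_induction_on with
    | _ N IH =>
    intro d hcard hd hd2
    set T := K.filter (fun i => d ≤ B i) with hT
    obtain ⟨i₂, hi₂K, hi₂w, hi₂b⟩ := hd2
    have hi₂T : i₂ ∈ T := Finset.mem_filter.2 ⟨hi₂K, hi₂b⟩
    obtain ⟨i₀, hi₀T, hi₀min⟩ := T.exists_min_image A ⟨i₂, hi₂T⟩
    set α := A i₀ with hα
    have hi₀K : i₀ ∈ K := (Finset.mem_filter.1 hi₀T).1
    have hi₀B : d ≤ B i₀ := (Finset.mem_filter.1 hi₀T).2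
    have hαd : α + w ≤ d := by
      have h1 : α ≤ A i₂ := hi₀min i₂ hi₂T
      linarith
    have hα0 : 0 ≤ α := hA0 _ hi₀K
    have hsub1 : Set.Icc α d ⊆ U ∩ Set.Icc 0 d := by
      intro x hx
      exact ⟨Set.mem_biUnion hi₀K ⟨hx.1, le_trans hx.2 hi₀B⟩, ⟨le_trans hα0 hx.1, hx.2⟩⟩
    have hd0 : 0 ≤ d := by linarith
    by_cases hcase : α < w
    · obtain ⟨iz, hizK, hiz0⟩ := h0
      have hsub : Set.Icc (0:ℝ) d ⊆ U ∩ Set.Icc 0 d := by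
        intro x hx
        refine ⟨?_, hx⟩
        by_cases hxb : x ≤ B iz
        · exact Set.mem_biUnion hizK ⟨by rw [hiz0]; exact hx.1, hxb⟩
        · push_neg at hxb
          have hwiz : w ≤ B iz := by have := hab iz hizK; rw [hiz0] at this; linarith
          exact (hsub1 ⟨by linarith, hx.2⟩).1
      have hvol : ENNReal.ofReal d ≤ volume (U ∩ Set.Icc 0 d) := by
        calc ENNReal.ofReal d = volume (Set.Icc (0:ℝ) d) := by rw [Real.volume_Icc, sub_zero]
          _ ≤ _ := measure_mono hsub
      calc ENNReal.ofReal (d + w) ≤ ENNReal.ofReal (2 * d) := by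
            apply ENNReal.ofReal_le_ofReal; linarith
        _ = 2 * ENNReal.ofReal d := ofReal_two_mul' d
        _ ≤ 2 * volume (U ∩ Set.Icc 0 d) := mul_le_mul_right hvol 2
    · push_neg at hcase
      have hx0W : (α - w) + w ≤ Wd := by
        have := hBW i₀ hi₀K
        linarith
      obtain ⟨i₁, hi₁K, hi₁A, hi₁B⟩ := hwin (α - w) (by linarith) hx0W
      rw [sub_add_cancel] at hi₁A
      have hd' : B i₁ < d := by
        by_contra hge
        push_neg at hge
        have : α ≤ A i₁ := hi₀min i₁ (Finset.mem_filter.2 ⟨hi₁K, hge⟩)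
        linarith
      set d' := B i₁ with hd'def
      have hcard' : ((K.image B).filter (fun x => x < d')).card < N := by
        have hss : (K.image B).filter (fun x => x < d') ⊂ (K.image B).filter (fun x => x < d) := by
          constructor
          · intro x hx
            simp only [Finset.mem_filter] at hx ⊢
            exact ⟨hx.1, lt_trans hx.2 hd'⟩
          · intro hsub'
            have hmem : d' ∈ (K.image B).filter (fun x => x < d) :=
              Finset.mem_filter.2 ⟨Finset.mem_image_of_mem B hi₁K, hd'⟩
            have := hsub' hmem
            simp only [Finset.mem_filter] at this
            exact lt_irrefl _ this.2
        exact lt_of_lt_of_le (Finset.card_lt_card hss) hcard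
      have hIH := IH _ hcard' d' le_rfl ⟨i₁, hi₁K, rfl⟩ ⟨i₁, hi₁K, hab i₁ hi₁K, le_rfl⟩
      have hd'0 : 0 < d' := by
        have h1 := hab i₁ hi₁K
        have h2 := hA0 i₁ hi₁K
        linarith
      by_cases hcase2 : d' ≤ α
      · -- gap case: add Icc α d
        have hinter : volume ((U ∩ Set.Icc 0 d') ∩ Set.Icc α d) = 0 := by
          apply measure_mono_null (show _ ⊆ Set.Icc α d' from fun x hx => ⟨hx.2.1, hx.1.2.2⟩)
          rw [Real.volume_Icc]
          exact ENNReal.ofReal_eq_zero.2 (by linarith)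
        have hunion : volume (U ∩ Set.Icc 0 d') + volume (Set.Icc α d) ≤ volume (U ∩ Set.Icc 0 d) := by
          have heq := measure_union_add_inter (μ := volume) (U ∩ Set.Icc 0 d') (measurableSet_Icc (a := α) (b := d))
          have hsub2 : (U ∩ Set.Icc 0 d') ∪ Set.Icc α d ⊆ U ∩ Set.Icc 0 d := by
            intro x hx
            rcases hx with hx | hx
            · exact ⟨hx.1, ⟨hx.2.1, le_trans hx.2.2 hd'.le⟩⟩
            · exact hsub1 hx
          calc volume (U ∩ Set.Icc 0 d') + volume (Set.Icc α d)
              = volume ((U ∩ Set.Icc 0 d') ∪ Set.Icc α d) + volume ((U ∩ Set.Icc 0 d') ∩ Set.Icc α d) := heq.symm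
            _ = volume ((U ∩ Set.Icc 0 d') ∪ Set.Icc α d) := by rw [hinter, add_zero]
            _ ≤ volume (U ∩ Set.Icc 0 d) := measure_mono hsub2
        calc ENNReal.ofReal (d + w) ≤ ENNReal.ofReal ((d' + w) + 2 * (d - α)) := by
              apply ENNReal.ofReal_le_ofReal
              have : α - w < d' := hi₁B
              linarith
          _ = ENNReal.ofReal (d' + w) + ENNReal.ofReal (2 * (d - α)) := by
              rw [ENNReal.ofReal_add (by linarith) (by linarith)]
          _ = ENNReal.ofReal (d' + w) + 2 * ENNReal.ofReal (d - α) := by rw [ofReal_two_mul']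
          _ ≤ 2 * volume (U ∩ Set.Icc 0 d') + 2 * ENNReal.ofReal (d - α) := add_le_add_left hIH _
          _ = 2 * (volume (U ∩ Set.Icc 0 d') + volume (Set.Icc α d)) := by
              rw [Real.volume_Icc, mul_add]
          _ ≤ 2 * volume (U ∩ Set.Icc 0 d) := mul_le_mul_right hunion 2
      · push_neg at hcase2
        have hinter : volume ((U ∩ Set.Icc 0 d') ∩ Set.Icc d' d) = 0 := by
          apply measure_mono_null (show _ ⊆ Set.Icc d' d' from fun x hx => ⟨hx.2.1, hx.1.2.2⟩)
          rw [Real.volume_Icc]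
          simp
        have hsubB : Set.Icc d' d ⊆ U ∩ Set.Icc 0 d := fun x hx =>
          hsub1 ⟨le_trans hcase2.le hx.1, hx.2⟩
        have hunion : volume (U ∩ Set.Icc 0 d') + volume (Set.Icc d' d) ≤ volume (U ∩ Set.Icc 0 d) := by
          have heq := measure_union_add_inter (μ := volume) (U ∩ Set.Icc 0 d') (measurableSet_Icc (a := d') (b := d))
          have hsub2 : (U ∩ Set.Icc 0 d') ∪ Set.Icc d' d ⊆ U ∩ Set.Icc 0 d := by
            intro x hx
            rcases hx with hx | hx
            · exact ⟨hx.1, ⟨hx.2.1, le_trans hx.2.2 hd'.le⟩⟩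
            · exact hsubB hx
          calc volume (U ∩ Set.Icc 0 d') + volume (Set.Icc d' d)
              = volume ((U ∩ Set.Icc 0 d') ∪ Set.Icc d' d) + volume ((U ∩ Set.Icc 0 d') ∩ Set.Icc d' d) := heq.symm
            _ = volume ((U ∩ Set.Icc 0 d') ∪ Set.Icc d' d) := by rw [hinter, add_zero]
            _ ≤ volume (U ∩ Set.Icc 0 d) := measure_mono hsub2
        calc ENNReal.ofReal (d + w) ≤ ENNReal.ofReal ((d' + w) + 2 * (d - d')) := by
              apply ENNReal.ofReal_le_ofReal
              linarith
          _ = ENNReal.ofReal (d' + w) + ENNReal.ofReal (2 * (d - d')) := by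
              rw [ENNReal.ofReal_add (by linarith) (by linarith)]
          _ = ENNReal.ofReal (d' + w) + 2 * ENNReal.ofReal (d - d') := by rw [ofReal_two_mul']
          _ ≤ 2 * volume (U ∩ Set.Icc 0 d') + 2 * ENNReal.ofReal (d - d') := add_le_add_left hIH _
          _ = 2 * (volume (U ∩ Set.Icc 0 d') + volume (Set.Icc d' d)) := by
              rw [Real.volume_Icc, mul_add]
          _ ≤ 2 * volume (U ∩ Set.Icc 0 d) := mul_le_mul_right hunion 2
  obtain ⟨iz, hizK, hiz0⟩ := h0
  have hne : (K.image B).Nonempty := ⟨B iz, Finset.mem_image_of_mem _ hizK⟩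
  set dm := (K.image B).max' hne with hdm
  obtain ⟨im, himK, himB⟩ : ∃ i ∈ K, B i = dm := by
    have := (K.image B).max'_mem hne
    simpa [Finset.mem_image] using this
  have hmain := main (((K.image B).filter (fun x => x < dm)).card) dm le_rfl
    ⟨im, himK, himB⟩ ⟨im, himK, by rw [← himB] at *; exact ⟨hab im himK, le_rfl⟩⟩
  have hlast : Wd < dm + w := by
    by_contra hge
    push_neg at hge
    have hdm0 : 0 ≤ dm := by
      have h1 := hab im himK
      have h2 := hA0 im himK
      linarith [himB]
    obtain ⟨i, hiK, _, hiB⟩ := hwin dm hdm0 hge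
    have : B i ≤ dm := Finset.le_max' _ _ (Finset.mem_image_of_mem _ hiK)
    linarith
  calc ENNReal.ofReal Wd ≤ ENNReal.ofReal (dm + w) := ENNReal.ofReal_le_ofReal hlast.le
    _ ≤ 2 * volume (U ∩ Set.Icc 0 dm) := hmain
    _ ≤ 2 * volume U := mul_le_mul_right (measure_mono Set.inter_subset_left) 2

end AuxMeasure

section AuxBL

variable {n : ℕ}

lemma greedy_sum_le (I : SPInstance n) (σ : Equiv.Perm (Fin n)) :
    ∑ f ∈ I.greedyF σ, (I.r f).w ≤ I.W := by
  classical
  unfold SPInstance.greedyF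
  have H : ∀ (L : List (Fin n)) (acc : Finset (Fin n)),
      (∑ f ∈ acc, (I.r f).w ≤ I.W) →
      ∑ f ∈ L.foldl (fun F k =>
        if (I.r (σ k)).w + ∑ f ∈ F, (I.r f).w ≤ I.W then insert (σ k) F else F) acc,
        (I.r f).w ≤ I.W := by
    intro L
    induction L with
    | nil => intro acc hacc; simpa using hacc
    | cons head tail ih =>
      intro acc hacc
      simp only [List.foldl_cons]
      apply ih
      split_ifs with hcond
      · by_cases hmem : σ head ∈ acc
        · rwa [Finset.insert_eq_self.2 hmem]
        · rw [Finset.sum_insert hmem]; exact hcond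
      · exact hacc
  exact H _ ∅ (by simpa using I.W_pos.le)

lemma bl_window (I : SPInstance n) (pos : Fin n → ℝ × ℝ) (hBL : I.IsBL pos)
    (j : Fin n) (hyj : 0 < (pos j).2)
    (x0 : ℝ) (hx0 : 0 ≤ x0) (hx0W : x0 + (I.r j).w ≤ I.W) :
    ∃ k : Fin n, k < j ∧ (pos k).1 < x0 + (I.r j).w ∧ x0 < (pos k).1 + (I.r k).w ∧
      (pos j).2 ≤ (pos k).2 + (I.r k).h := by
  classical
  by_contra hcon
  push_neg at hcon
  set S : Finset (Fin n) := Finset.univ.filter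
    (fun k => k < j ∧ (pos k).1 < x0 + (I.r j).w ∧ x0 < (pos k).1 + (I.r k).w) with hSdef
  set T : Finset ℝ := insert 0 (S.image (fun k => (pos k).2 + (I.r k).h)) with hTdef
  have hTne : T.Nonempty := ⟨0, Finset.mem_insert_self _ _⟩
  set u := T.max' hTne with hu
  have hu0 : 0 ≤ u := Finset.le_max' _ _ (Finset.mem_insert_self _ _)
  have huS : ∀ k ∈ S, (pos k).2 + (I.r k).h ≤ u := by
    intro k hk
    apply Finset.le_max' T
    exact Finset.mem_insert_of_mem (Finset.mem_image.2 ⟨k, hk, rfl⟩)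
  have huj : u < (pos j).2 := by
    apply (Finset.max'_lt_iff _ hTne).2
    intro y hy
    rcases Finset.mem_insert.1 hy with rfl | hy
    · exact hyj
    · obtain ⟨k, hk, rfl⟩ := Finset.mem_image.1 hy
      simp only [hSdef, Finset.mem_filter] at hk
      exact hcon k hk.2.1 hk.2.2.1 hk.2.2.2
  have hfeas : I.FeasibleAt pos j (x0, u) := by
    refine ⟨⟨hx0, hx0W, hu0⟩, ?_⟩
    intro k hk
    by_cases hkS : k ∈ S
    · exact disjoint_openBox_of_ysep (Or.inr (huS k hkS))
    · simp only [hSdef, Finset.mem_filter, Finset.mem_univ, true_and, not_and, not_lt] at hkS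
      rcases lt_or_ge (pos k).1 (x0 + (I.r j).w) with h1 | h1
      · exact disjoint_openBox_of_xsep (Or.inr (hkS hk h1))
      · exact disjoint_openBox_of_xsep (Or.inl h1)
  rcases (hBL j).2 _ hfeas with h | h
  · exact absurd h (not_lt.2 huj.le)
  · exact absurd h.1 (by simp; linarith)

lemma bl_left_supporter (I : SPInstance n) (pos : Fin n → ℝ × ℝ) (hBL : I.IsBL pos)
    (i : Fin n) (hx : 0 < (pos i).1) :
    ∃ b : Fin n, b < i ∧ (pos b).1 + (I.r b).w = (pos i).1 ∧
      (pos b).2 < (pos i).2 + (I.r i).h ∧ (pos i).2 < (pos b).2 + (I.r b).h := by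
  classical
  by_contra hcon
  push_neg at hcon
  set D : Finset (Fin n) := Finset.univ.filter
    (fun k => k < i ∧ (pos k).1 + (I.r k).w < (pos i).1) with hDdef
  set T : Finset ℝ := insert (pos i).1 (D.image (fun k => (pos i).1 - ((pos k).1 + (I.r k).w))) with hTdef
  have hTne : T.Nonempty := ⟨(pos i).1, Finset.mem_insert_self _ _⟩
  set ε := T.min' hTne with hε
  have hεpos : 0 < ε := by
    apply (Finset.lt_min'_iff _ hTne).2
    intro y hy
    rcases Finset.mem_insert.1 hy with rfl | hy
    · exact hx
    · obtain ⟨k, hk, rfl⟩ := Finset.mem_image.1 hy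
      simp only [hDdef, Finset.mem_filter] at hk
      linarith [hk.2.2]
  have hεle : ε ≤ (pos i).1 := Finset.min'_le _ _ (Finset.mem_insert_self _ _)
  have hεD : ∀ k ∈ D, (pos k).1 + (I.r k).w ≤ (pos i).1 - ε := by
    intro k hk
    have h2 : ε ≤ (pos i).1 - ((pos k).1 + (I.r k).w) := by
      apply Finset.min'_le T
      exact Finset.mem_insert_of_mem (Finset.mem_image.2 ⟨k, hk, rfl⟩)
    linarith
  have hfeas : I.FeasibleAt pos i ((pos i).1 - ε, (pos i).2) := by
    refine ⟨⟨show (0:ℝ) ≤ (pos i).1 - ε by linarith,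
      show (pos i).1 - ε + (I.r i).w ≤ I.W by linarith [(hBL i).1.1.2.1], (hBL i).1.1.2.2⟩, ?_⟩
    intro k hk
    have hdisj := (hBL i).1.2 k hk
    rcases sep_of_disjoint (I.w_pos i) (I.h_pos i) (I.w_pos k) (I.h_pos k) hdisj with (h | h) | h
    · exact disjoint_openBox_of_xsep (Or.inl (by simp only; linarith))
    · rcases eq_or_lt_of_le h with heq | hlt2
      · have hysep : (pos i).2 + (I.r i).h ≤ (pos k).2 ∨ (pos k).2 + (I.r k).h ≤ (pos i).2 := by
          by_cases hyk : (pos k).2 < (pos i).2 + (I.r i).h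
          · exact Or.inr (hcon k hk heq hyk)
          · exact Or.inl (not_lt.1 hyk)
        exact disjoint_openBox_of_ysep (by simpa using hysep)
      · have hkD : k ∈ D := by
          simp only [hDdef, Finset.mem_filter, Finset.mem_univ, true_and]
          exact ⟨hk, hlt2⟩
        exact disjoint_openBox_of_xsep (Or.inr (by simpa using hεD k hkD))
    · exact disjoint_openBox_of_ysep (by simpa using h)
  rcases (hBL i).2 _ hfeas with h | h
  · simp only at h
    exact absurd h (lt_irrefl _)
  · have := h.2
    simp only at this
    linarith

end AuxBL

section AuxF

variable {n : ℕ}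

lemma F_positions (I : SPInstance n) (d : FQW I) (hord : d.IsOrdered)
    (pos : Fin n → ℝ × ℝ) (hBL : I.IsBL pos) :
    ∀ k : Fin n, (k : ℕ) < d.F.card →
      pos k = (∑ l ∈ Finset.univ.filter (fun l : Fin n => (l : ℕ) < (k : ℕ)), (I.r l).w, 0) := by
  classical
  set S : ℕ → ℝ := fun m => ∑ l ∈ Finset.univ.filter (fun l : Fin n => (l : ℕ) < m), (I.r l).w with hS
  have hS0 : S 0 = 0 := by simp [hS]
  have hSnonneg : ∀ m, 0 ≤ S m := fun m => Finset.sum_nonneg (fun l _ => (I.w_pos l).le)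
  have hSmono : ∀ {m m' : ℕ}, m ≤ m' → S m ≤ S m' := by
    intro m m' h
    apply Finset.sum_le_sum_of_subset_of_nonneg
    · intro x hx
      simp only [Finset.mem_filter, Finset.mem_univ, true_and] at hx ⊢
      omega
    · intros
      exact (I.w_pos _).le
  have hSsucc : ∀ l : Fin n, S ((l : ℕ) + 1) = S (l : ℕ) + (I.r l).w := by
    intro l
    have hins : Finset.univ.filter (fun x : Fin n => (x : ℕ) < (l : ℕ) + 1) =
        insert l (Finset.univ.filter (fun x : Fin n => (x : ℕ) < (l : ℕ))) := by
      ext x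
      simp only [Finset.mem_filter, Finset.mem_univ, true_and, Finset.mem_insert]
      constructor
      · intro hx
        rcases Nat.lt_succ_iff_lt_or_eq.1 hx with h | h
        · exact Or.inr h
        · exact Or.inl (Fin.ext h)
      · rintro (rfl | hx)
        · omega
        · omega
    simp only [hS]
    rw [hins, Finset.sum_insert (by simp)]
    ring
  have hSF : ∀ m : ℕ, m ≤ d.F.card → S m ≤ I.W := by
    intro m hm
    calc S m ≤ ∑ f ∈ d.F, (I.r f).w := by
          apply Finset.sum_le_sum_of_subset_of_nonneg
          · intro x hx
            simp only [Finset.mem_filter, Finset.mem_univ, true_and] at hx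
            exact (hord.1 x).2 (lt_of_lt_of_le hx hm)
          · intros
            exact (I.w_pos _).le
      _ ≤ I.W := greedy_sum_le I d.σ
  suffices H : ∀ m : ℕ, ∀ k : Fin n, (k : ℕ) = m → (k : ℕ) < d.F.card →
      pos k = (S (k : ℕ), 0) by
    intro k hka
    exact H (k : ℕ) k rfl hka
  intro m
  induction m using Nat.strong_induction_on with
  | _ m IH =>
    intro k hkm hka
    have hIH : ∀ l : Fin n, (l : ℕ) < (k : ℕ) → pos l = (S (l : ℕ), 0) := by
      intro l hl
      exact IH (l : ℕ) (hkm ▸ hl) l rfl (lt_trans hl hka)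
    have hfeas : I.FeasibleAt pos k (S (k : ℕ), 0) := by
      refine ⟨⟨hSnonneg _, ?_, le_refl 0⟩, ?_⟩
      · show S (k : ℕ) + (I.r k).w ≤ I.W
        have h1 := hSsucc k
        have h2 := hSF ((k : ℕ) + 1) (Nat.succ_le_of_lt hka)
        linarith
      · intro l hl
        have hlk : (l : ℕ) < (k : ℕ) := hl
        rw [hIH l hlk]
        apply disjoint_openBox_of_xsep
        right
        show S (l : ℕ) + (I.r l).w ≤ S (k : ℕ)
        calc S (l : ℕ) + (I.r l).w = S ((l : ℕ) + 1) := (hSsucc l).symm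
          _ ≤ S (k : ℕ) := hSmono (Nat.succ_le_of_lt hlk)
    have hmin := (hBL k).2 _ hfeas
    have hy0 : (pos k).2 = 0 ∧ (pos k).1 ≤ S (k : ℕ) := by
      rcases hmin with h | h
      · exfalso
        have : (0:ℝ) ≤ (pos k).2 := (hBL k).1.1.2.2
        simp only at h
        linarith
      · exact ⟨by simpa using h.1, by simpa using h.2⟩
    have hxge : S (k : ℕ) ≤ (pos k).1 := by
      have key : ∀ m : ℕ, m ≤ (k : ℕ) → S m ≤ (pos k).1 := by
        intro m
        induction m with
        | zero => intro _; rw [hS0]; exact (hBL k).1.1.1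
        | succ m IHm =>
          intro hm
          have hmk : m < (k : ℕ) := hm
          have hmn : m < n := lt_trans hmk k.isLt
          set l : Fin n := ⟨m, hmn⟩ with hldef
          have hlk : l < k := hmk
          have hl := hIH l hmk
          have hd := (hBL k).1.2 l hlk
          rcases sep_of_disjoint (I.w_pos k) (I.h_pos k) (I.w_pos l) (I.h_pos l) hd with (h | h) | (h | h)
          · exfalso
            rw [hl] at h
            simp only at h
            have := IHm (le_of_lt hmk)
            have := I.w_pos k
            linarith
          · rw [hl] at h
            simp only at h
            have : S (m + 1) = S m + (I.r l).w := hSsucc l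
            linarith
          · exfalso
            rw [hl] at h
            simp only at h
            have := I.h_pos k
            linarith [hy0.1]
          · exfalso
            rw [hl] at h
            simp only at h
            have := I.h_pos l
            linarith [hy0.1]
      exact key _ le_rfl
    have : pos k = ((pos k).1, (pos k).2) := rfl
    rw [this]
    rw [Prod.mk.injEq]
    exact ⟨le_antisymm hy0.2 hxge, hy0.1⟩

end AuxF

/-- **Lemma.** For `L + 1 ≤ i ≤ a + b` (1-based), either the region `H_i` is
contained in `H'`, or every proper horizontal line in `H_i` is at least half
occupied.  In 0-based indexing these are the regions of the rectangles `j ∈ Q`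
with `iL < j`. -/
theorem H_above_left_rect {n : ℕ} (I : SPInstance n) (d : FQW I)
    (hord : d.IsOrdered) (pos : Fin n → ℝ × ℝ) (hBL : I.IsBL pos)
    (hQ : d.Q.Nonempty) (iT iL : Fin n) (hiT : IsTopRect I d pos iT)
    (hiL : IsLeftRect I d pos iT iL)
    (j : Fin n) (hj₁ : iL < j) (hj₂ : (j : ℕ) < d.F.card + d.Q.card) :
    I.regionH pos j ⊆ Hprime I pos iT ∨
    (∀ t : ℝ, I.ProperLine pos t → maxYBelow pos (j : ℕ) ≤ t → t < (pos j).2 →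
      1 / 2 ≤ I.occFrac pos t) := by
  classical
  have hfeasAll : ∀ i : Fin n, I.InStrip i (pos i) := fun i => (hBL i).1.1
  have hsep : ∀ i k : Fin n, i ≠ k →
      ((pos i).1 + (I.r i).w ≤ (pos k).1 ∨ (pos k).1 + (I.r k).w ≤ (pos i).1) ∨
      ((pos i).2 + (I.r i).h ≤ (pos k).2 ∨ (pos k).2 + (I.r k).h ≤ (pos i).2) := by
    intro i k hne
    rcases lt_or_gt_of_ne hne with h | h
    · rcases sep_of_disjoint (I.w_pos k) (I.h_pos k) (I.w_pos i) (I.h_pos i)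
        ((hBL k).1.2 i h) with (h' | h') | (h' | h')
      · exact Or.inl (Or.inr h')
      · exact Or.inl (Or.inl h')
      · exact Or.inr (Or.inr h')
      · exact Or.inr (Or.inl h')
    · exact sep_of_disjoint (I.w_pos i) (I.h_pos i) (I.w_pos k) (I.h_pos k) ((hBL i).1.2 k h)
  set a := d.F.card with ha
  have hiLQ : iL ∈ d.Q := by
    rcases hiL with ⟨h, _, _⟩ | ⟨_, h⟩
    · exact h
    · rw [h]; exact hiT.1
  have haiL : a ≤ (iL : ℕ) := ((hord.2.1 iL).1 hiLQ).1
  have hiLj : (iL : ℕ) < (j : ℕ) := hj₁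
  have hjQ : j ∈ d.Q := (hord.2.1 j).2 ⟨le_trans haiL (le_of_lt hiLj), hj₂⟩
  have hwidth : ∀ k : Fin n, a ≤ (k : ℕ) → (k : ℕ) ≤ (j : ℕ) → (I.r j).w ≤ (I.r k).w :=
    fun k h1 h2 => hord.2.2.2 k j h1 h2 hj₂
  have hbdd : BddAbove (Set.range (fun k : {k : Fin n // (k : ℕ) < (j : ℕ)} => (pos (k : Fin n)).2)) :=
    Set.Finite.bddAbove (Set.finite_range _)
  have hyle : ∀ k : Fin n, (k : ℕ) < (j : ℕ) → (pos k).2 ≤ maxYBelow pos (j : ℕ) := by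
    intro k hk
    exact le_ciSup hbdd ⟨k, hk⟩
  rcases hiL with ⟨hQL, hxL0, _⟩ | ⟨hnoQ, hLeqT⟩
  · -- Case A : r_L exists at the left boundary; every proper line is half occupied.
    right
    intro t hproper hmaxle hlt
    have hmax0 : 0 ≤ maxYBelow pos (j : ℕ) := le_trans (hfeasAll iL).2.2 (hyle iL hiLj)
    have hyj_pos : 0 < (pos j).2 := lt_of_le_of_lt (le_trans hmax0 hmaxle) hlt
    set K : Finset (Fin n) := Finset.univ.filter
      (fun k => k < j ∧ (pos j).2 ≤ (pos k).2 + (I.r k).h) with hK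
    have hKmem : ∀ {k : Fin n}, k ∈ K ↔ (k < j ∧ (pos j).2 ≤ (pos k).2 + (I.r k).h) := by
      intro k; simp [hK]
    have hwin : ∀ x0 : ℝ, 0 ≤ x0 → x0 + (I.r j).w ≤ I.W →
        ∃ k ∈ K, (pos k).1 < x0 + (I.r j).w ∧ x0 < (pos k).1 + (I.r k).w := by
      intro x0 h1 h2
      obtain ⟨k, hk1, hk2, hk3, hk4⟩ := bl_window I pos hBL j hyj_pos x0 h1 h2
      exact ⟨k, hKmem.2 ⟨hk1, hk4⟩, hk2, hk3⟩
    have hwj_le : (0:ℝ) + (I.r j).w ≤ I.W := by simpa using I.w_le_W j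
    -- the width of r_L is at least the width of r_j
    have hwL : (I.r j).w ≤ (I.r iL).w := hwidth iL haiL (le_of_lt hiLj)
    have hyLmax : (pos iL).2 ≤ maxYBelow pos (j : ℕ) := hyle iL hiLj
    -- no rectangle of F is in K
    have hKQ : ∀ k ∈ K, a ≤ (k : ℕ) := by
      intro k hk
      by_contra hlt'
      push_neg at hlt'
      have hkpos := F_positions I d hord pos hBL k hlt'
      have h0a : 0 < a := lt_of_le_of_lt (Nat.zero_le _) hlt'
      have hn0 : 0 < n := lt_of_le_of_lt (Nat.zero_le _) k.isLt
      set z : Fin n := ⟨0, hn0⟩ with hz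
      have hzpos := F_positions I d hord pos hBL z h0a
      have hzsum : pos z = (0, 0) := by
        rw [hzpos]
        norm_num
      have hhz : (I.r k).h ≤ (I.r z).h := hord.2.2.1 z k (by simp [hz, Fin.le_def]) hlt'
      have h1 : (pos j).2 ≤ (I.r k).h := by
        have h2 := (hKmem.1 hk).2
        rw [hkpos] at h2
        simpa using h2
      have hzL : z ≠ iL := by
        intro h
        have : (z : ℕ) = (iL : ℕ) := by rw [h]
        simp [hz] at this
        omega
      rcases hsep z iL hzL with (h | h) | (h | h)
      · rw [hzsum, hxL0] at h
        simp at h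
        linarith [I.w_pos z]
      · rw [hzsum, hxL0] at h
        simp at h
        linarith [I.w_pos iL]
      · rw [hzsum] at h
        simp at h
        have : (pos iL).2 ≤ t := le_trans hyLmax hmaxle
        linarith
      · rw [hzsum] at h
        simp at h
        linarith [(hfeasAll iL).2.2, I.h_pos iL]
    have hKwidth : ∀ k ∈ K, (I.r j).w ≤ (I.r k).w := fun k hk =>
      hwidth k (hKQ k hk) (le_of_lt (hKmem.1 hk).1)
    -- crux : there is a rectangle of K touching the left boundary
    have hcrux : ∃ k ∈ K, (pos k).1 = 0 := by
      by_contra hno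
      push_neg at hno
      have hKne : K.Nonempty := by
        obtain ⟨k, hk, _⟩ := hwin 0 le_rfl hwj_le
        exact ⟨k, hk⟩
      obtain ⟨M, hMK, hMmin⟩ := K.exists_min_image (fun k => (pos k).1) hKne
      have hMx : 0 < (pos M).1 := lt_of_le_of_ne (hfeasAll M).1 (Ne.symm (hno M hMK))
      have hMγw : (pos M).1 < (I.r j).w := by
        obtain ⟨k0, hk0K, hk0lt, _⟩ := hwin 0 le_rfl hwj_le
        have := hMmin k0 hk0K
        rw [zero_add] at hk0lt
        linarith
      obtain ⟨b, hbM, hbedge, hbY1, hbY2⟩ := bl_left_supporter I pos hBL M hMx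
      have htopM : (pos j).2 ≤ (pos M).2 + (I.r M).h := (hKmem.1 hMK).2
      have hMj : (M : ℕ) < (j : ℕ) := (hKmem.1 hMK).1
      have hMiL : M ≠ iL := by
        intro h
        rw [h, hxL0] at hMx
        exact lt_irrefl _ hMx
      have htmax : (pos iL).2 ≤ t := le_trans hyLmax hmaxle
      have hMtop : (pos iL).2 + (I.r iL).h ≤ (pos M).2 := by
        rcases hsep M iL hMiL with (h | h) | (h | h)
        · exfalso; rw [hxL0] at h; linarith [I.w_pos M]
        · exfalso; rw [hxL0] at h; linarith
        · exfalso; linarith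
        · exact h
      have hbw : (I.r b).w ≤ (pos M).1 := by
        have := (hfeasAll b).1
        linarith
      have hbiL : b ≠ iL := by
        intro h
        rw [h] at hbw
        linarith
      have hbY3 : (pos iL).2 + (I.r iL).h ≤ (pos b).2 := by
        rcases hsep b iL hbiL with (h | h) | (h | h)
        · exfalso; rw [hbedge, hxL0] at h; linarith
        · exfalso
          rw [hxL0, zero_add] at h
          have hxb0 : 0 ≤ (pos b).1 := (hfeasAll b).1
          have : (pos b).1 < (pos M).1 := by linarith [I.w_pos b]
          linarith
        · exfalso; linarith [I.h_pos iL]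
        · exact h
      have hb0 : 0 < (pos b).2 := by
        have h1 : (0:ℝ) < (pos iL).2 + (I.r iL).h := by
          linarith [(hfeasAll iL).2.2, I.h_pos iL]
        linarith
      have hbF : ¬ ((b : ℕ) < a) := by
        intro hba
        have hb := F_positions I d hord pos hBL b hba
        rw [hb] at hb0
        simp at hb0
      have hbj : (b : ℕ) < (j : ℕ) := lt_trans (show (b:ℕ) < (M:ℕ) from hbM) hMj
      have hwb : (I.r j).w ≤ (I.r b).w := hwidth b (not_lt.1 hbF) (le_of_lt hbj)
      linarith
    -- apply the measure lemma
    have hlemA := lemA K (fun k => (pos k).1) (fun k => (pos k).1 + (I.r k).w) (I.r j).w I.W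
      (I.w_pos j)
      (fun k hk => by
        show (pos k).1 + (I.r j).w ≤ (pos k).1 + (I.r k).w
        linarith [hKwidth k hk])
      (fun k hk => (hfeasAll k).1)
      (fun k hk => (hfeasAll k).2.1)
      hcrux
      (fun x0 h1 h2 => by
        obtain ⟨k, hk, h3, h4⟩ := hwin x0 h1 h2
        exact ⟨k, hk, h3, h4⟩)
    have hsubU : (⋃ k ∈ K, Set.Icc (pos k).1 ((pos k).1 + (I.r k).w)) ⊆ I.occupied pos t := by
      intro x hx
      obtain ⟨k, hk, hxk⟩ := Set.mem_iUnion₂.1 hx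
      apply Set.mem_biUnion (show k ∈ {j' : Fin n | I.Intersects pos j' t} from ?_) hxk
      constructor
      · have h1 : (pos k).2 ≤ t := le_trans (hyle k (hKmem.1 hk).1) hmaxle
        exact lt_of_le_of_ne h1 (Ne.symm (hproper k).1)
      · exact lt_of_lt_of_le hlt (hKmem.1 hk).2
    have hoccW : I.occupied pos t ⊆ Set.Icc 0 I.W := by
      intro x hx
      obtain ⟨k, _, hxk⟩ := Set.mem_iUnion₂.1 hx
      exact ⟨le_trans (hfeasAll k).1 hxk.1, le_trans hxk.2 (hfeasAll k).2.1⟩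
    have hvol_le : volume (I.occupied pos t) ≤ ENNReal.ofReal I.W := by
      calc volume (I.occupied pos t) ≤ volume (Set.Icc (0:ℝ) I.W) := measure_mono hoccW
        _ = ENNReal.ofReal I.W := by rw [Real.volume_Icc, sub_zero]
    have h2 : ENNReal.ofReal I.W ≤ 2 * volume (I.occupied pos t) :=
      le_trans hlemA (mul_le_mul_right (measure_mono hsubU) 2)
    have hne_top : volume (I.occupied pos t) ≠ ⊤ :=
      (lt_of_le_of_lt hvol_le ENNReal.ofReal_lt_top).ne
    have hfin : I.W ≤ 2 * (volume (I.occupied pos t)).toReal := by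
      have hne2 : (2 : ENNReal) * volume (I.occupied pos t) ≠ ⊤ :=
        ENNReal.mul_ne_top (by simp) hne_top
      have := ENNReal.toReal_mono hne2 h2
      rw [ENNReal.toReal_ofReal I.W_pos.le] at this
      rw [ENNReal.toReal_mul] at this
      simpa using this
    show 1 / 2 ≤ (volume (I.occupied pos t)).toReal / I.W
    rw [le_div_iff₀ I.W_pos]
    linarith
  · -- Case B : no rectangle of Q touches the left boundary, r_L = r_T.
    left
    intro p hp
    rw [SPInstance.regionH, Set.mem_prod] at hp
    obtain ⟨hp1, hp2⟩ := hp
    rw [Set.mem_Ico] at hp2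
    have hTj : (iT : ℕ) < (j : ℕ) := by rw [← hLeqT]; exact hiLj
    have h1 : (pos iT).2 ≤ p.2 := le_trans (hyle iT hTj) hp2.1
    have h2 : p.2 ≤ (pos iT).2 + (I.r iT).h := by
      have hfacts := hiT.2 j hjQ
      have hjtop : (pos j).2 < (pos iT).2 + (I.r iT).h := by
        rcases hfacts with h | ⟨h, _⟩
        · linarith [I.h_pos j]
        · linarith [I.h_pos j]
      exact le_of_lt (lt_trans hp2.2 hjtop)
    rw [Hprime, Set.mem_prod]
    exact ⟨hp1, Or.inr ⟨h1, h2⟩⟩
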